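/- (One-step decrease, regime p5.) Let f1 ∈ F_{μ1,L1} and f2 ∈ F_{μ2,L2} with μ1 > −μ2 > 0, L1 > μ2, μ1 < L1, μ2 < L2, L2 > 0, and max{ (1/L1)·(2 + L2/μ2), 0 } < 1/μ1 + 1/μ2 + 1/L2. Let F := f1 − f2 and consider a DCA step from x to x⁺ with g2 ∈ ∂f2(x), g1⁺ ∈ ∂f1(x⁺), g1⁺ = g2, and let g2⁺ ∈ ∂f2(x⁺). Then F(x) − F(x⁺) ≥ ((μ1 + μ2)/μ2²)·(1/2)‖g1⁺ − g2⁺‖². -/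

import Mathlib

open RealInnerProductSpace

variable {H : Type*} [NormedAddCommGroup H] [InnerProductSpace ℝ H]

/-- `f` has lower curvature `μ`, i.e. `f - (μ/2)‖·‖²` is convex. -/
def HasLowerCurvature (μ : ℝ) (f : H → ℝ) : Prop :=
  ConvexOn ℝ Set.univ fun x => f x - μ / 2 * ‖x‖ ^ 2

/-- `f` has upper curvature `L`, i.e. `(L/2)‖·‖² - f` is convex. -/
def HasUpperCurvature (L : ℝ) (f : H → ℝ) : Prop :=
  ConvexOn ℝ Set.univ fun x => L / 2 * ‖x‖ ^ 2 - f x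

/-- `g` is a subgradient of `f` (of lower curvature `μ`) at `x`. -/
def IsSubgradient (μ : ℝ) (f : H → ℝ) (x g : H) : Prop :=
  ∀ y, f y ≥ f x + ⟪g, y - x⟫ + μ / 2 * ‖y - x‖ ^ 2

lemma subgrad_of_quad_ub (Φ : H → ℝ) (hΦ : ConvexOn ℝ Set.univ Φ) (p s : H) (C : ℝ)
    (hC : 0 ≤ C)
    (hub : ∀ y, Φ y ≤ Φ p + ⟪s, y - p⟫ + C / 2 * ‖y - p‖ ^ 2) :
    ∀ y, Φ p + ⟪s, y - p⟫ ≤ Φ y := by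
  intro y
  apply le_of_forall_pos_le_add
  intro ε hε
  set D : ℝ := C / 2 * ‖y - p‖ ^ 2 with hD
  have hD0 : 0 ≤ D := by positivity
  set t : ℝ := min 1 (ε / (D + 1)) with ht
  have htpos : 0 < t := lt_min one_pos (div_pos hε (by linarith))
  have hte : t * (D + 1) ≤ ε := by
    have h1 : t ≤ ε / (D + 1) := min_le_right _ _
    have h2 : (0:ℝ) < D + 1 := by linarith
    calc t * (D + 1) ≤ ε / (D + 1) * (D + 1) := by
          exact mul_le_mul_of_nonneg_right h1 (le_of_lt h2)
      _ = ε := div_mul_cancel₀ _ (ne_of_gt h2)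
  have h1t : (0:ℝ) < 1 + t := by linarith
  set z : H := p + t • (p - y) with hz
  have hcomb : (t / (1 + t)) • y + (1 / (1 + t)) • z = p := by
    rw [hz]
    match_scalars <;> field_simp <;> ring
  have hcvx := hΦ.2 (Set.mem_univ y) (Set.mem_univ z)
    (le_of_lt (div_pos htpos h1t)) (le_of_lt (div_pos one_pos h1t))
    (by rw [← add_div, add_comm t 1, div_self (ne_of_gt h1t)])
  rw [hcomb] at hcvx
  have hm : Φ p * (1 + t) ≤ t * Φ y + 1 * Φ z := by
    simp only [smul_eq_mul] at hcvx
    rw [div_mul_eq_mul_div, div_mul_eq_mul_div, ← add_div, le_div_iff₀ h1t] at hcvx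
    exact hcvx
  have hubz := hub z
  have hzp : z - p = t • (p - y) := by rw [hz]; abel
  have hz1 : ⟪s, z - p⟫ = t * (-⟪s, y - p⟫) := by
    rw [hzp, real_inner_smul_right, show p - y = -(y - p) by abel, inner_neg_right]
  have hz2 : ‖z - p‖ ^ 2 = t ^ 2 * ‖y - p‖ ^ 2 := by
    rw [hzp, norm_smul, Real.norm_eq_abs, norm_sub_rev, mul_pow, sq_abs]
  rw [hz1, hz2] at hubz
  have hub2 : Φ z ≤ Φ p + t * (-⟪s, y - p⟫) + t ^ 2 * D := by
    rw [hD]; nlinarith [hubz]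
  have hmul : t * (t * (D + 1)) ≤ t * ε := mul_le_mul_of_nonneg_left hte (le_of_lt htpos)
  have hkey : t * (Φ p + ⟪s, y - p⟫) ≤ t * (Φ y + ε) := by
    nlinarith [hm, hub2, hmul, sq_nonneg t]
  exact le_of_mul_le_mul_left hkey htpos

lemma descent_of_subgrad (L mu : ℝ) (f : H → ℝ) (p g : H)
    (hg : IsSubgradient mu f p g) (y : H) :
    L / 2 * ‖y‖ ^ 2 - f y ≤ (L / 2 * ‖p‖ ^ 2 - f p) + ⟪L • p - g, y - p⟫
      + (L - mu) / 2 * ‖y - p‖ ^ 2 := by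
  have h := hg y
  have e1 : ⟪L • p - g, y - p⟫ = L * ⟪p, y - p⟫ - ⟪g, y - p⟫ := by
    rw [inner_sub_left, real_inner_smul_left]
  have e2 : ‖y‖ ^ 2 = ‖p‖ ^ 2 + 2 * ⟪p, y - p⟫ + ‖y - p‖ ^ 2 := by
    have h0 := norm_add_sq_real p (y - p)
    have e0 : p + (y - p) = y := by abel
    rw [e0] at h0
    exact h0
  rw [e1, e2]
  linarith [h]

lemma coco (L mu : ℝ) (hml : mu < L) (f : H → ℝ)
    (hup : ConvexOn ℝ Set.univ fun v => L / 2 * ‖v‖ ^ 2 - f v)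
    (pa pb ga gb : H) (ha : IsSubgradient mu f pa ga) (hb : IsSubgradient mu f pb gb) :
    L / 2 * ‖pa‖ ^ 2 - f pa ≤ (L / 2 * ‖pb‖ ^ 2 - f pb) + ⟪L • pa - ga, pa - pb⟫
      - 1 / (2 * (L - mu)) * ‖(L • pa - ga) - (L • pb - gb)‖ ^ 2 := by
  have hC : (0:ℝ) < L - mu := by linarith
  have hCne : (L - mu) ≠ 0 := ne_of_gt hC
  have hsub := subgrad_of_quad_ub (fun v => L / 2 * ‖v‖ ^ 2 - f v) hup pa (L • pa - ga)
    (L - mu) (le_of_lt hC) (fun y => descent_of_subgrad L mu f pa ga ha y)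
  set w : H := (L • pa - ga) - (L • pb - gb) with hw
  set y0 : H := pb + (L - mu)⁻¹ • w with hy0
  have h1 := hsub y0
  have h2 := descent_of_subgrad L mu f pb gb hb y0
  have e1 : y0 - pb = (L - mu)⁻¹ • w := by rw [hy0]; abel
  have e2 : y0 - pa = (pb - pa) + (L - mu)⁻¹ • w := by rw [hy0]; abel
  have i1 : ⟪L • pb - gb, y0 - pb⟫ = (L - mu)⁻¹ * ⟪L • pb - gb, w⟫ := by
    rw [e1, real_inner_smul_right]
  have i2 : ⟪L • pa - ga, y0 - pa⟫
      = -⟪L • pa - ga, pa - pb⟫ + (L - mu)⁻¹ * ⟪L • pa - ga, w⟫ := by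
    rw [e2, inner_add_right, real_inner_smul_right,
      show pb - pa = -(pa - pb) by abel, inner_neg_right]
  have i3 : ‖y0 - pb‖ ^ 2 = ((L - mu)⁻¹) ^ 2 * ‖w‖ ^ 2 := by
    rw [e1, norm_smul, Real.norm_eq_abs, mul_pow, sq_abs]
  have i4 : ⟪L • pa - ga, w⟫ - ⟪L • pb - gb, w⟫ = ‖w‖ ^ 2 := by
    rw [← inner_sub_left, ← hw, real_inner_self_eq_norm_sq]
  have i4' : (L - mu)⁻¹ * ⟪L • pa - ga, w⟫ - (L - mu)⁻¹ * ⟪L • pb - gb, w⟫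
      = (L - mu)⁻¹ * ‖w‖ ^ 2 := by linear_combination (L - mu)⁻¹ * i4
  have i6 : (L - mu) / 2 * (((L - mu)⁻¹) ^ 2 * ‖w‖ ^ 2) - (L - mu)⁻¹ * ‖w‖ ^ 2
      = -(1 / (2 * (L - mu)) * ‖w‖ ^ 2) := by
    field_simp
    ring
  rw [i2] at h1
  rw [i1, i3] at h2
  linarith [h1, h2, i4', i6]

set_option maxHeartbeats 1000000 in
/-- one-step decrease, regime p5. -/
theorem dca_one_step_p5
    (mu1 mu2 L1 L2 : ℝ)
    (h1 : -mu2 < mu1) (h2 : 0 < -mu2) (h3 : mu2 < L1)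
    (h4 : mu1 < L1) (h5 : mu2 < L2) (h6 : 0 < L2)
    (h7 : max ((1 / L1) * (2 + L2 / mu2)) 0 < 1 / mu1 + 1 / mu2 + 1 / L2)
    (f1 f2 : H → ℝ)
    (h1lo : HasLowerCurvature mu1 f1) (h1up : HasUpperCurvature L1 f1)
    (h2lo : HasLowerCurvature mu2 f2) (h2up : HasUpperCurvature L2 f2)
    (x xp g2 g2p : H)
    (hg2 : IsSubgradient mu2 f2 x g2) (hg1p : IsSubgradient mu1 f1 xp g2)
    (hg2p : IsSubgradient mu2 f2 xp g2p) :
    (f1 x - f2 x) - (f1 xp - f2 xp) ≥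
      (mu1 + mu2) / mu2 ^ 2 * ((1 : ℝ) / 2) * ‖g2 - g2p‖ ^ 2 := by
  have hmu2neg : mu2 < 0 := by linarith
  have hmu1pos : 0 < mu1 := by linarith
  have hC : (0:ℝ) < L2 - mu2 := by linarith
  have hm1 : mu1 ≠ 0 := ne_of_gt hmu1pos
  have hm2 : mu2 ≠ 0 := ne_of_lt hmu2neg
  have hL2 : L2 ≠ 0 := ne_of_gt h6
  -- h7 consequence
  have hsum : (0:ℝ) < 1 / mu1 + 1 / mu2 + 1 / L2 := lt_of_le_of_lt (le_max_right _ 0) h7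
  have hprod : mu1 * mu2 * L2 < 0 := by
    have hp0 : (0:ℝ) < mu1 * (-mu2) * L2 := by positivity
    nlinarith [hp0]
  have hfs : (1 / mu1 + 1 / mu2 + 1 / L2) * (mu1 * mu2 * L2)
      = mu2 * L2 + mu1 * L2 + mu1 * mu2 := by field_simp
  have hR : mu1 * mu2 + mu1 * L2 + mu2 * L2 < 0 := by
    nlinarith [mul_neg_of_pos_of_neg hsum hprod]
  -- basic expansions
  have exp_norm : ‖x‖ ^ 2 = ‖xp‖ ^ 2 + 2 * ⟪xp, x - xp⟫ + ‖x - xp‖ ^ 2 := by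
    have h0 := norm_add_sq_real xp (x - xp)
    have e0 : xp + (x - xp) = x := by abel
    rw [e0] at h0; exact h0
  have exp_xd : ⟪x, x - xp⟫ = ⟪xp, x - xp⟫ + ‖x - xp‖ ^ 2 := by
    have h0 : ⟪x - xp, x - xp⟫ = ⟪x, x - xp⟫ - ⟪xp, x - xp⟫ := inner_sub_left _ _ _
    have h1' := real_inner_self_eq_norm_sq (x - xp)
    linarith [h0, h1']
  have iu : ⟪g2p, x - xp⟫ = ⟪g2, x - xp⟫ - ⟪g2 - g2p, x - xp⟫ := by
    have h0 : ⟪g2 - g2p, x - xp⟫ = ⟪g2, x - xp⟫ - ⟪g2p, x - xp⟫ := inner_sub_left _ _ _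
    linarith [h0]
  -- the two cocoercivity inequalities for f2
  have J1 := coco L2 mu2 h5 f2 h2up x xp g2 g2p hg2 hg2p
  have J2 := coco L2 mu2 h5 f2 h2up xp x g2p g2 hg2p hg2
  -- rewrite inner products in J1
  have iJ1 : ⟪L2 • x - g2, x - xp⟫ = L2 * ⟪x, x - xp⟫ - ⟪g2, x - xp⟫ := by
    rw [inner_sub_left, real_inner_smul_left]
  have iJ2 : ⟪L2 • xp - g2p, xp - x⟫ = -(L2 * ⟪xp, x - xp⟫) + ⟪g2p, x - xp⟫ := by
    rw [show xp - x = -(x - xp) by abel, inner_neg_right, inner_sub_left,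
      real_inner_smul_left]
    ring
  -- norms of gradient-step differences
  have hwv : L2 • x - g2 - (L2 • xp - g2p) = L2 • (x - xp) - (g2 - g2p) := by module
  have hwn : ‖L2 • x - g2 - (L2 • xp - g2p)‖ ^ 2
      = L2 ^ 2 * ‖x - xp‖ ^ 2 - 2 * L2 * ⟪g2 - g2p, x - xp⟫ + ‖g2 - g2p‖ ^ 2 := by
    rw [hwv, norm_sub_sq_real, norm_smul, Real.norm_eq_abs, mul_pow, sq_abs,
      real_inner_smul_left, real_inner_comm (x - xp) (g2 - g2p)]
    ring
  have hwv2 : L2 • xp - g2p - (L2 • x - g2) = -(L2 • x - g2 - (L2 • xp - g2p)) := by module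
  rw [iJ1, exp_xd, exp_norm, hwn] at J1
  rw [iJ2, iu, hwv2, norm_neg, exp_norm, hwn] at J2
  -- scalar forms
  have hJ1s : f2 x - f2 xp ≥ ⟪g2, x - xp⟫ - L2 / 2 * ‖x - xp‖ ^ 2
      + 1 / (2 * (L2 - mu2)) * (L2 ^ 2 * ‖x - xp‖ ^ 2
        - 2 * L2 * ⟪g2 - g2p, x - xp⟫ + ‖g2 - g2p‖ ^ 2) := by linarith [J1]
  have hJ2s : f2 x - f2 xp ≤ (⟪g2, x - xp⟫ - ⟪g2 - g2p, x - xp⟫)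
      + L2 / 2 * ‖x - xp‖ ^ 2
      - 1 / (2 * (L2 - mu2)) * (L2 ^ 2 * ‖x - xp‖ ^ 2
        - 2 * L2 * ⟪g2 - g2p, x - xp⟫ + ‖g2 - g2p‖ ^ 2) := by linarith [J2]
  have hA1 := hg1p x
  -- positivity square
  have hQv : ‖mu2 • (x - xp) - (g2 - g2p)‖ ^ 2
      = mu2 ^ 2 * ‖x - xp‖ ^ 2 - 2 * mu2 * ⟪g2 - g2p, x - xp⟫ + ‖g2 - g2p‖ ^ 2 := by
    rw [norm_sub_sq_real, norm_smul, Real.norm_eq_abs, mul_pow, sq_abs,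
      real_inner_smul_left, real_inner_comm (x - xp) (g2 - g2p)]
    ring
  have hQ : 0 ≤ mu2 ^ 2 * ‖x - xp‖ ^ 2 - 2 * mu2 * ⟪g2 - g2p, x - xp⟫ + ‖g2 - g2p‖ ^ 2 := by
    rw [← hQv]; positivity
  -- abbreviations
  set a : ℝ := ‖x - xp‖ ^ 2 with ha
  set s : ℝ := ‖g2 - g2p‖ ^ 2 with hs
  set tt : ℝ := ⟪g2 - g2p, x - xp⟫ with htt
  set gd : ℝ := ⟪g2, x - xp⟫ with hgd
  -- key algebraic identity
  have key : (f1 x - f2 x) - (f1 xp - f2 xp) - (mu1 + mu2) / mu2 ^ 2 * ((1:ℝ) / 2) * s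
      = (f1 x - (f1 xp + gd + mu1 / 2 * a))
      + (mu1 / (-mu2)) * ((gd - tt) + L2 / 2 * a
          - 1 / (2 * (L2 - mu2)) * (L2 ^ 2 * a - 2 * L2 * tt + s) - (f2 x - f2 xp))
      + ((mu1 + mu2) / (-mu2)) * ((f2 x - f2 xp) - (gd - L2 / 2 * a
          + 1 / (2 * (L2 - mu2)) * (L2 ^ 2 * a - 2 * L2 * tt + s)))
      + (-(mu1 * mu2 + mu1 * L2 + mu2 * L2)) / (2 * (L2 - mu2) * mu2 ^ 2)
          * (mu2 ^ 2 * a - 2 * mu2 * tt + s) := by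
    field_simp
    ring
  have t1 : 0 ≤ f1 x - (f1 xp + gd + mu1 / 2 * a) := by linarith [hA1]
  have c2 : (0:ℝ) ≤ mu1 / (-mu2) := by positivity
  have c3 : (0:ℝ) ≤ (mu1 + mu2) / (-mu2) := by
    apply div_nonneg <;> linarith
  have c4 : (0:ℝ) ≤ (-(mu1 * mu2 + mu1 * L2 + mu2 * L2)) / (2 * (L2 - mu2) * mu2 ^ 2) := by
    apply div_nonneg
    · linarith
    · positivity
  have t2 : 0 ≤ (mu1 / (-mu2)) * ((gd - tt) + L2 / 2 * a
      - 1 / (2 * (L2 - mu2)) * (L2 ^ 2 * a - 2 * L2 * tt + s) - (f2 x - f2 xp)) :=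
    mul_nonneg c2 (by linarith [hJ2s])
  have t3 : 0 ≤ ((mu1 + mu2) / (-mu2)) * ((f2 x - f2 xp) - (gd - L2 / 2 * a
      + 1 / (2 * (L2 - mu2)) * (L2 ^ 2 * a - 2 * L2 * tt + s))) :=
    mul_nonneg c3 (by linarith [hJ1s])
  have t4 : 0 ≤ (-(mu1 * mu2 + mu1 * L2 + mu2 * L2)) / (2 * (L2 - mu2) * mu2 ^ 2)
      * (mu2 ^ 2 * a - 2 * mu2 * tt + s) := mul_nonneg c4 hQ
  linarith [key, t1, t2, t3, t4]
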